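/- Let n ≥ 2 and m ≥ 2 be integers, let f ∈ R_m = ℤ[x_1, ..., x_m], and let 1 ≤ i < j ≤ m. Then the integer c_{f^{2^n}}(x_i^{2^{n−1}} x_j^{2^{n−1}})/2 satisfies the congruence c_{f^{2^n}}(x_i^{2^{n−1}} x_j^{2^{n−1}})/2 ≡ c_f(1) · c_f(x_i x_j) + c_f(x_i) · c_f(x_j) (mod 2). -/

import Mathlib

open MvPolynomial

variable {σ : Type*}

theorem my_expand_expand (p q : ℕ) {R : Type*} [CommSemiring R] (φ : MvPolynomial σ R) :
    expand p (expand q φ) = expand (p * q) φ := by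
  induction φ using MvPolynomial.induction_on with
  | C a => simp [expand_C]
  | add r s hr hs => simp [map_add, hr, hs]
  | mul_X r k hr => simp [map_mul, map_pow, expand_X, hr, ← pow_mul, mul_comm p q]

theorem my_pow_two_pow (k : ℕ) (h : MvPolynomial σ (ZMod 2)) :
    h ^ (2 ^ k) = expand (2 ^ k) h := by
  induction k with
  | zero => simp [expand_one_apply]
  | succ k ih =>
      rw [pow_succ, pow_mul, ih, ← expand_zmod (p := 2), my_expand_expand, mul_comm 2 (2^k)]

theorem my_expand_monomial {R : Type*} [CommSemiring R] {p : ℕ} (hp : p ≠ 0)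
    (d : σ →₀ ℕ) (r : R) :
    expand p (monomial d r) = monomial (p • d) r := by
  rw [expand_monomial, monomial_eq, Finsupp.prod, Finsupp.support_smul_eq hp]

theorem my_coeff_expand {R : Type*} [CommSemiring R] {p : ℕ} (hp : p ≠ 0)
    (φ : MvPolynomial σ R) (d : σ →₀ ℕ) :
    coeff (p • d) (expand p φ) = coeff d φ := by
  classical
  have hinj : ∀ v : σ →₀ ℕ, p • v = p • d ↔ v = d := by
    intro v
    constructor
    · intro h
      ext k
      have := DFunLike.congr_fun h k
      simp only [Finsupp.smul_apply, smul_eq_mul] at this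
      exact Nat.eq_of_mul_eq_mul_left (Nat.pos_of_ne_zero hp) this
    · rintro rfl; rfl
  conv_lhs => rw [φ.as_sum]
  rw [map_sum]
  simp_rw [my_expand_monomial hp]
  rw [MvPolynomial.coeff_sum]
  simp only [coeff_monomial, hinj, Finset.sum_ite_eq']
  split_ifs with h
  · rfl
  · exact (notMem_support_iff.mp h).symm

theorem my_pair_class {m : ℕ} {i j : Fin m} (hij : i ≠ j) (a b : Fin m →₀ ℕ)
    (h : a + b = Finsupp.single i 1 + Finsupp.single j 1) :
    (a = 0 ∧ b = Finsupp.single i 1 + Finsupp.single j 1) ∨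
    (a = Finsupp.single i 1 ∧ b = Finsupp.single j 1) ∨
    (a = Finsupp.single j 1 ∧ b = Finsupp.single i 1) ∨
    (a = Finsupp.single i 1 + Finsupp.single j 1 ∧ b = 0) := by
  have hk : ∀ k, a k + b k =
      (if i = k then 1 else 0) + (if j = k then 1 else 0) := by
    intro k
    have := DFunLike.congr_fun h k
    simpa [Finsupp.single_apply] using this
  have harep : a = Finsupp.single i (a i) + Finsupp.single j (a j) := by
    ext k
    rcases eq_or_ne k i with rfl | hki
    · simp [Finsupp.single_apply, hij.symm]
    · rcases eq_or_ne k j with rfl | hkj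
      · simp [Finsupp.single_apply, hij]
      · have := hk k
        simp only [Ne.symm hki, Ne.symm hkj, if_false] at this
        simp [Finsupp.single_apply, Ne.symm hki, Ne.symm hkj]
        omega
  have hai : a i ≤ 1 := by have := hk i; simp [hij.symm] at this; omega
  have haj : a j ≤ 1 := by have := hk j; simp [hij] at this; omega
  interval_cases hA : a i <;> interval_cases hB : a j
  · left
    have ha : a = 0 := by rw [harep]; simp
    refine ⟨ha, ?_⟩
    rw [ha, zero_add] at h; exact h
  · right; right; left
    have ha : a = Finsupp.single j 1 := by rw [harep]; simp
    refine ⟨ha, ?_⟩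
    rw [ha] at h
    rw [add_comm (Finsupp.single i 1)] at h
    exact add_left_cancel h
  · right; left
    have ha : a = Finsupp.single i 1 := by rw [harep]; simp
    refine ⟨ha, ?_⟩
    rw [ha] at h
    exact add_left_cancel h
  · right; right; right
    have ha : a = Finsupp.single i 1 + Finsupp.single j 1 := harep
    refine ⟨ha, ?_⟩
    rw [ha] at h
    nth_rewrite 2 [← add_zero (Finsupp.single i 1 + Finsupp.single j 1)] at h
    exact add_left_cancel h

theorem my_coeff_sq {m : ℕ} {i j : Fin m} (hij : i ≠ j) (f : MvPolynomial (Fin m) ℤ) :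
    coeff (Finsupp.single i 1 + Finsupp.single j 1) (f ^ 2) =
      2 * (coeff 0 f * coeff (Finsupp.single i 1 + Finsupp.single j 1) f +
        coeff (Finsupp.single i 1) f * coeff (Finsupp.single j 1) f) := by
  classical
  set si : Fin m →₀ ℕ := Finsupp.single i 1 with hsi
  set sj : Fin m →₀ ℕ := Finsupp.single j 1 with hsj
  have hne1 : si ≠ sj := by
    intro h
    have := DFunLike.congr_fun h i
    simp [hsi, hsj, Finsupp.single_apply, hij.symm] at this
  have hsine : si ≠ 0 := by simp [hsi, Finsupp.single_eq_zero]
  have hsjne : sj ≠ 0 := by simp [hsj, Finsupp.single_eq_zero]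
  have hsiu : si ≠ si + sj := by
    intro h
    have := DFunLike.congr_fun h j
    simp [hsi, hsj, Finsupp.single_apply, hij] at this
  have hsju : sj ≠ si + sj := by
    intro h
    have := DFunLike.congr_fun h i
    simp [hsi, hsj, Finsupp.single_apply, hij.symm] at this
  have hune : si + sj ≠ 0 := by
    intro h
    exact hsine (by ext k; have := DFunLike.congr_fun h k; simp at this ⊢; omega)
  have hset : Finset.HasAntidiagonal.antidiagonal (si + sj) =
      ({((0 : Fin m →₀ ℕ), si + sj), (si, sj), (sj, si), (si + sj, 0)} :
        Finset ((Fin m →₀ ℕ) × (Fin m →₀ ℕ))) := by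
    ext p
    simp only [Finset.HasAntidiagonal.mem_antidiagonal, Finset.mem_insert, Finset.mem_singleton, Prod.ext_iff]
    constructor
    · intro hp
      rcases my_pair_class hij p.1 p.2 hp with ⟨h1, h2⟩ | ⟨h1, h2⟩ | ⟨h1, h2⟩ | ⟨h1, h2⟩
      · exact Or.inl ⟨h1, h2⟩
      · exact Or.inr (Or.inl ⟨h1, h2⟩)
      · exact Or.inr (Or.inr (Or.inl ⟨h1, h2⟩))
      · exact Or.inr (Or.inr (Or.inr ⟨h1, h2⟩))
    · rintro (⟨h1, h2⟩ | ⟨h1, h2⟩ | ⟨h1, h2⟩ | ⟨h1, h2⟩) <;>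
        rw [h1, h2] <;> simp [add_comm]
  rw [sq, coeff_mul, hset]
  rw [Finset.sum_insert (by simp [Prod.ext_iff, hsine.symm, hsjne.symm, hune.symm]),
    Finset.sum_insert (by simp [Prod.ext_iff, hne1, hsiu]),
    Finset.sum_insert (by simp [Prod.ext_iff, hsju]),
    Finset.sum_singleton]
  show coeff 0 f * coeff (si + sj) f + (coeff si f * coeff sj f +
    (coeff sj f * coeff si f + coeff (si + sj) f * coeff 0 f)) = _
  ring


/-- The integer `c_{f^{2^n}}(x_i^{2^{n-1}} x_j^{2^{n-1}})/2` is congruent to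
`c_f(1)·c_f(x_i x_j) + c_f(x_i)·c_f(x_j)` modulo `2`. -/
theorem stmt_7 (n m : ℕ) (hn : 2 ≤ n) (hm : 2 ≤ m)
    (f : MvPolynomial (Fin m) ℤ) (i j : Fin m) (hij : i < j) :
    (2 : ℤ) ∣ MvPolynomial.coeff
        (Finsupp.single i (2 ^ (n - 1)) + Finsupp.single j (2 ^ (n - 1))) (f ^ 2 ^ n) ∧
    MvPolynomial.coeff
        (Finsupp.single i (2 ^ (n - 1)) + Finsupp.single j (2 ^ (n - 1))) (f ^ 2 ^ n) / 2 ≡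
      MvPolynomial.coeff 0 f *
          MvPolynomial.coeff (Finsupp.single i 1 + Finsupp.single j 1) f +
        MvPolynomial.coeff (Finsupp.single i 1) f *
          MvPolynomial.coeff (Finsupp.single j 1) f [ZMOD 2] := by
  have hijne : i ≠ j := ne_of_lt hij
  set N : ℕ := 2 ^ (n - 1) with hN
  have hNpos : N ≠ 0 := pow_ne_zero _ two_ne_zero
  set α : Fin m →₀ ℕ := Finsupp.single i N + Finsupp.single j N with hαdef
  set u : Fin m →₀ ℕ := Finsupp.single i 1 + Finsupp.single j 1 with hu
  have hα : α = N • u := by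
    rw [hαdef, hu, smul_add, Finsupp.smul_single, Finsupp.smul_single, smul_eq_mul, mul_one]
  -- f^N ≡ expand N f mod 2
  have hmap : map (Int.castRingHom (ZMod 2)) (f ^ N - expand N f) = 0 := by
    rw [map_sub, map_pow, map_expand, hN, my_pow_two_pow, sub_self]
  have hdvd : C (2 : ℤ) ∣ (f ^ N - expand N f) := by
    have := (C_dvd_iff_zmod 2 _).mpr hmap
    simpa using this
  obtain ⟨q, hq⟩ := hdvd
  have hq' : f ^ N = expand N f + C 2 * q := by rw [← sub_eq_iff_eq_add']; rw [hq]
  have hpow : f ^ 2 ^ n =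
      expand N (f ^ 2) + C 2 * (C 2 * (expand N f * q) + C 2 * (q * q)) := by
    have h2n : 2 ^ n = N * 2 := by rw [hN, ← pow_succ]; congr 1; omega
    rw [h2n, pow_mul, hq', map_pow,
      show (C 2 : MvPolynomial (Fin m) ℤ) = 2 by norm_num]
    ring
  have hc : coeff α (f ^ 2 ^ n) =
      2 * (coeff 0 f * coeff u f + coeff (Finsupp.single i 1) f * coeff (Finsupp.single j 1) f)
        + 2 * (2 * coeff α (expand N f * q) + 2 * coeff α (q * q)) := by
    rw [hpow, coeff_add, hα, my_coeff_expand hNpos, my_coeff_sq hijne, coeff_C_mul,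
      coeff_add, coeff_C_mul, coeff_C_mul]
  set A : ℤ := coeff 0 f * coeff u f +
      coeff (Finsupp.single i 1) f * coeff (Finsupp.single j 1) f with hA
  set s1 : ℤ := coeff α (expand N f * q) with hs1
  set s2 : ℤ := coeff α (q * q) with hs2
  constructor
  · exact ⟨A + 2 * s1 + 2 * s2, by rw [hc]; ring⟩
  · show _ % 2 = _ % 2
    omega
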